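/- arXiv:1402.3351 — 2 statements merged into one kernel-verified Lean document; each statement's English description precedes it below -/
import Mathlib

section
/- Let g = k ⊕ p be a Lie algebra with k a subalgebra and p a k-submodule under the adjoint action (i.e. [k,p] ⊆ p), and let g' ⊆ g be a subalgebra with g' = (g'∩k) ⊕ (g'∩p) and g'∩p ≠ 0. Let V be an irreducible g-module such that: (1) as a k-module V decomposes as a direct sum of irreducible k-submodules Vₖ, (2) each Vₖ is irreducible as a (g'∩k)-module, (3) the Vₖ are pairwise non-isomorphic as (g'∩k)-modules, and (4) the k-submodule of p generated by g'∩p equals p. Then V is irreducible as a g'-module. -/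
/-- `W₁` and `W₂` are isomorphic as modules over the set `s` of Lie algebra elements:
there is a linear equivalence intertwining the action of every element of `s`. -/
def IsoAsModules {K L V : Type*} [Field K] [LieRing L] [LieAlgebra K L]
    [AddCommGroup V] [Module K V] [LieRingModule L V] [LieModule K L V]
    (s : Set L) (W₁ W₂ : Submodule K V) : Prop :=
  ∃ e : W₁ ≃ₗ[K] W₂, ∀ x ∈ s, ∀ v w : W₁,
    ⁅x, (v : V)⁆ = (w : V) → ⁅x, ((e v : W₂) : V)⁆ = ((e w : W₂) : V)

open scoped DirectSum in
/-- Let `g = k ⊕ p` with `k` a subalgebra and `[k,p] ⊆ p`, and let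
`g' ⊆ g` be a subalgebra with `g' = (g'∩k) ⊕ (g'∩p)` and `g'∩p ≠ 0`.  Let `V` be an
irreducible `g`-module decomposing as a direct sum of `k`-irreducible submodules `Wᵢ`
which are irreducible and pairwise non-isomorphic as `(g'∩k)`-modules, and such that the
`k`-submodule of `p` generated by `g'∩p` is `p`.  Then `V` is irreducible over `g'`. -/
theorem statement_1 {K : Type*} [Field K] [CharZero K]
    {L V : Type*} [LieRing L] [LieAlgebra K L]
    [AddCommGroup V] [Module K V] [LieRingModule L V] [LieModule K L V]
    (k : LieSubalgebra K L) (p : Submodule K L)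
    (hkp : ∀ x ∈ k, ∀ y ∈ p, ⁅x, y⁆ ∈ p)
    (hdec : IsCompl k.toSubmodule p)
    (g' : LieSubalgebra K L)
    (hg'dec : g'.toSubmodule = g'.toSubmodule ⊓ k.toSubmodule ⊔ g'.toSubmodule ⊓ p)
    (hg'p : g'.toSubmodule ⊓ p ≠ ⊥)
    {ι : Type*} [DecidableEq ι] (W : ι → Submodule K V)
    (hinternal : DirectSum.IsInternal W)
    (hkinv : ∀ i, ∀ x ∈ k, ∀ v ∈ W i, ⁅x, v⁆ ∈ W i)
    (hirr_k : ∀ i, W i ≠ ⊥ ∧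
      ∀ U ≤ W i, (∀ x ∈ k, ∀ v ∈ U, ⁅x, v⁆ ∈ U) → U = ⊥ ∨ U = W i)
    (hirr_g'k : ∀ i, ∀ U ≤ W i,
      (∀ x ∈ (g' : Set L) ∩ (k : Set L), ∀ v ∈ U, ⁅x, v⁆ ∈ U) → U = ⊥ ∨ U = W i)
    (hnoniso : ∀ i j, i ≠ j → ¬ IsoAsModules ((g' : Set L) ∩ (k : Set L)) (W i) (W j))
    (hgen : ∀ q : Submodule K L, q ≤ p → g'.toSubmodule ⊓ p ≤ q →
      (∀ x ∈ k, ∀ y ∈ q, ⁅x, y⁆ ∈ q) → p ≤ q)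
    (hVnt : Nontrivial V)
    (hVirr : ∀ U : Submodule K V, (∀ x : L, ∀ v ∈ U, ⁅x, v⁆ ∈ U) → U = ⊥ ∨ U = ⊤) :
    ∀ U : Submodule K V, (∀ x ∈ g', ∀ v ∈ U, ⁅x, v⁆ ∈ U) → U = ⊥ ∨ U = ⊤ := by
  
  classical
  intro U hU
  -- the decomposition equivalence
  set d : V ≃ₗ[K] ⨁ i, ↥(W i) :=
    (LinearEquiv.ofBijective (DirectSum.coeLinearMap W) hinternal).symm with hd
  have hdsymm : ∀ f : ⨁ i, ↥(W i), d.symm f = DirectSum.coeLinearMap W f := fun f => rfl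
  have hdsame : ∀ (i : ι) (x : V) (hx : x ∈ W i), d x i = ⟨x, hx⟩ := fun i x hx =>
    hinternal.ofBijective_coeLinearMap_of_mem hx
  have hdne : ∀ (i j : ι), i ≠ j → ∀ (x : V), x ∈ W i → d x j = 0 := fun i j hij x hx =>
    hinternal.ofBijective_coeLinearMap_of_mem_ne hij hx
  have hzero : ∀ v : V, (∀ l, d v l = 0) → v = 0 := by
    intro v h
    have : d v = 0 := DFinsupp.ext h
    simpa using d.injective (by simpa using this)
  -- equivariance of the components under the action of k
  have hE : ∀ x, x ∈ k → ∀ (v : V) (l : ι), ((d ⁅x, v⁆ l : V)) = ⁅x, ((d v l : V))⁆ := by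
    intro x hx v l
    have hv : v ∈ ⨆ i, W i := by
      rw [hinternal.submodule_iSup_eq_top]; trivial
    refine Submodule.iSup_induction (motive := fun v : V => ((d ⁅x, v⁆ l : V)) = ⁅x, ((d v l : V))⁆)
      _ hv ?_ ?_ ?_
    · intro m y hy
      have hy' : ⁅x, y⁆ ∈ W m := hkinv m x hx y hy
      by_cases hlm : l = m
      · subst hlm
        rw [hdsame l y hy, hdsame l _ hy']
      · rw [hdne m l (fun h => hlm h.symm) y hy, hdne m l (fun h => hlm h.symm) _ hy']
        simp
    · simp
    · intro a b ha hb
      rw [lie_add, map_add, DFinsupp.add_apply, Submodule.coe_add, ha, hb,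
        map_add, DFinsupp.add_apply, Submodule.coe_add, lie_add]
  -- W i is stable under g' ∩ k
  have hW_g'k : ∀ i, ∀ x ∈ (g' : Set L) ∩ (k : Set L), ∀ v ∈ W i, ⁅x, v⁆ ∈ W i :=
    fun i x hx v hv => hkinv i x hx.2 v hv
  -- the sum of those W i contained in U
  set T : Set ι := {l | W l ≤ U} with hT
  set U' : Submodule K V := ⨆ l ∈ T, W l with hU'
  have hU'le : U' ≤ U := by
    apply iSup₂_le
    intro l hl
    exact hl
  -- components of elements of U' outside T vanish
  have hU'comp : ∀ v ∈ U', ∀ m ∉ T, d v m = 0 := by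
    intro v hv m hm
    rw [hU', iSup_subtype'] at hv
    refine Submodule.iSup_induction (motive := fun v : V => d v m = 0) _ hv ?_ ?_ ?_
    · rintro ⟨l, hl⟩ x hx
      exact hdne l m (fun h => hm (h ▸ hl)) x hx
    · simp
    · intro a b ha hb
      rw [map_add, DFinsupp.add_apply, ha, hb, add_zero]
  -- key lemma: every element of U lies in U'
  have key : ∀ n (S : Finset ι), S.card ≤ n → ∀ u ∈ U, (∀ l, l ∉ S → d u l = 0) → u ∈ U' := by
    intro n
    induction n with
    | zero =>
      intro S hS u hu hsupp
      have : u = 0 := hzero u (fun l => hsupp l (by simp [Finset.card_eq_zero.mp (Nat.le_zero.mp hS)]))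
      simp [this]
    | succ n IH =>
      intro S hS u hu hsupp
      by_cases hex : ∃ l ∈ S, d u l = 0
      · obtain ⟨l, hl, hl0⟩ := hex
        refine IH (S.erase l) ?_ u hu ?_
        · have := Finset.card_erase_of_mem hl
          omega
        · intro m hm
          by_cases hml : m = l
          · rw [hml]; exact hl0
          · exact hsupp m (fun h => hm (Finset.mem_erase.mpr ⟨hml, h⟩))
      push_neg at hex
      by_cases hexT : ∃ l ∈ S, W l ≤ U
      · -- strip off the component in W l
        obtain ⟨l, hl, hlT⟩ := hexT
        set w : V := (d u l : V) with hw
        have hwW : w ∈ W l := (d u l).2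
        have hlT' : l ∈ T := hlT
        have hwU' : w ∈ U' := le_iSup₂ (f := fun l (_ : l ∈ T) => W l) l hlT' hwW
        have hdw : ∀ m, m ≠ l → d w m = 0 := fun m hm => hdne l m (Ne.symm hm) w hwW
        have hdwl : d w l = d u l := hdsame l w hwW
        have huw : u - w ∈ U := Submodule.sub_mem U hu (hlT hwW)
        have : u - w ∈ U' := by
          refine IH (S.erase l) ?_ _ huw ?_
          · have := Finset.card_erase_of_mem hl
            omega
          · intro m hm
            rw [map_sub, DFinsupp.sub_apply]
            by_cases hml : m = l
            · rw [hml, hdwl, sub_self]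
            · rw [hdw m hml, sub_zero, hsupp m (fun h => hm (Finset.mem_erase.mpr ⟨hml, h⟩))]
        have := Submodule.add_mem U' this hwU'
        simpa using this
      push_neg at hexT
      -- now no W l with l ∈ S is contained in U; if S is nonempty we get a contradiction
      by_cases hScard : S.card ≤ 1
      · interval_cases h : S.card
        · have : u = 0 := hzero u (fun l => hsupp l (by simp [Finset.card_eq_zero.mp h]))
          simp [this]
        · obtain ⟨i, hSi⟩ := Finset.card_eq_one.mp h
          have hui : u ∈ W i := by
            have h1 : ∀ m, m ≠ i → d u m = 0 := by
              intro m hm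
              exact hsupp m (by simp [hSi, hm])
            have h2 : u - (d u i : V) = 0 := by
              apply hzero
              intro m
              rw [map_sub, DFinsupp.sub_apply]
              by_cases hmi : m = i
              · subst hmi; rw [hdsame m _ (d u m).2]; simp
              · rw [h1 m hmi, hdne i m (fun hh => hmi hh.symm) _ (d u i).2, sub_zero]
            have := sub_eq_zero.mp h2
            rw [this]; exact (d u i).2
          have hune : u ≠ 0 := by
            intro h0
            exact hex i (by simp [hSi]) (by simp [h0])
          -- U ⊓ W i is a nonzero (g'∩k)-stable submodule of W i, hence equals W i
          have hstab : ∀ x ∈ (g' : Set L) ∩ (k : Set L), ∀ v ∈ U ⊓ W i, ⁅x, v⁆ ∈ U ⊓ W i :=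
            fun x hx v hv => ⟨hU x hx.1 v hv.1, hkinv i x hx.2 v hv.2⟩
          rcases hirr_g'k i (U ⊓ W i) inf_le_right hstab with hbot | htop
          · exact absurd (hbot ▸ ⟨hu, hui⟩ : u ∈ (⊥ : Submodule K V)) (by simpa using hune)
          · exact absurd (htop ▸ inf_le_left : W i ≤ U) (hexT i (by simp [hSi]))
      · -- |S| ≥ 2 : contradiction with pairwise non-isomorphism
        push_neg at hScard
        obtain ⟨i, hi, j, hj, hij⟩ := Finset.one_lt_card.mp hScard
        exfalso
        -- the submodule M of U supported on S
        set M : Submodule K V :=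
          { carrier := {v | v ∈ U ∧ ∀ l, l ∉ S → d v l = 0}
            zero_mem' := ⟨Submodule.zero_mem U, fun l _ => by simp⟩
            add_mem' := fun ha hb => ⟨Submodule.add_mem U ha.1 hb.1, fun l hl => by
              rw [map_add, DFinsupp.add_apply, ha.2 l hl, hb.2 l hl, add_zero]⟩
            smul_mem' := fun c v hv => ⟨Submodule.smul_mem U c hv.1, fun l hl => by
              rw [map_smul, DFinsupp.smul_apply, hv.2 l hl, smul_zero]⟩ } with hM
        have hMmem : ∀ v : V, v ∈ M ↔ v ∈ U ∧ ∀ l, l ∉ S → d v l = 0 := fun v => Iff.rfl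
        have hMstab : ∀ x ∈ (g' : Set L) ∩ (k : Set L), ∀ v ∈ M, ⁅x, v⁆ ∈ M := by
          intro x hx v hv
          refine ⟨hU x hx.1 v hv.1, fun l hl => ?_⟩
          have := hE x hx.2 v l
          rw [hv.2 l hl] at this
          simpa using this
        have huM : u ∈ M := ⟨hu, hsupp⟩
        -- injectivity of each component on M
        have hMinj : ∀ m ∈ S, ∀ v ∈ M, d v m = 0 → v = 0 := by
          intro m hm v hv hv0
          have hvU' : v ∈ U' := by
            refine IH (S.erase m) ?_ v hv.1 ?_
            · have := Finset.card_erase_of_mem hm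
              omega
            · intro l hl
              by_cases hlm : l = m
              · rw [hlm]; exact hv0
              · exact hv.2 l (fun h => hl (Finset.mem_erase.mpr ⟨hlm, h⟩))
          apply hzero
          intro l
          by_cases hlS : l ∈ S
          · exact hU'comp v hvU' l (fun h => hexT l hlS h)
          · exact hv.2 l hlS
        -- surjectivity of each component on M
        have hMsurj : ∀ m ∈ S, ∀ w : ↥(W m), ∃ v ∈ M, d v m = w := by
          intro m hm w
          -- the image of M under the m-th component is a nonzero stable submodule of W m
          set πm : V →ₗ[K] V :=
            { toFun := fun v => (d v m : V)
              map_add' := fun a b => by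
                show ((d (a + b) m : V)) = (d a m : V) + (d b m : V)
                rw [map_add, DFinsupp.add_apply]; rfl
              map_smul' := fun c a => by
                show ((d (c • a) m : V)) = c • (d a m : V)
                rw [map_smul, DFinsupp.smul_apply]; rfl } with hπm
          set A : Submodule K V := M.map πm with hA
          have hAle : A ≤ W m := by
            rintro _ ⟨v, _, rfl⟩
            exact (d v m).2
          have hAstab : ∀ x ∈ (g' : Set L) ∩ (k : Set L), ∀ v ∈ A, ⁅x, v⁆ ∈ A := by
            rintro x hx _ ⟨v, hv, rfl⟩
            refine ⟨⁅x, v⁆, hMstab x hx v hv, ?_⟩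
            show (d ⁅x, v⁆ m : V) = ⁅x, (d v m : V)⁆
            exact hE x hx.2 v m
          rcases hirr_g'k m A hAle hAstab with hbot | htop
          · exfalso
            have humem : (d u m : V) ∈ A := ⟨u, huM, rfl⟩
            rw [hbot] at humem
            have : d u m = 0 := by
              apply Subtype.ext
              simpa using humem
            exact hex m hm this
          · have : (w : V) ∈ A := by rw [htop]; exact w.2
            obtain ⟨v, hv, hvw⟩ := this
            exact ⟨v, hv, Subtype.ext hvw⟩
        -- build the isomorphism W i ≃ W j
        have hφ : ∀ m ∈ S, ∃ φ : ↥M →ₗ[K] ↥(W m), Function.Bijective φ ∧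
            ∀ v : ↥M, (φ v : V) = (d (v : V) m : V) := by
          intro m hm
          refine ⟨{ toFun := fun v => d (v : V) m
                    map_add' := fun a b => by
                      show d (((a + b : ↥M) : V)) m = d (a : V) m + d (b : V) m
                      rw [Submodule.coe_add, map_add, DFinsupp.add_apply]
                    map_smul' := fun c a => by
                      show d (((c • a : ↥M) : V)) m = c • d (a : V) m
                      rw [Submodule.coe_smul, map_smul, DFinsupp.smul_apply] },
            ⟨?_, ?_⟩, fun v => rfl⟩
          · intro a b hab
            apply Subtype.ext
            have hab' : d (a : V) m = d (b : V) m := hab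
            have : d ((a : V) - b) m = 0 := by
              rw [map_sub, DFinsupp.sub_apply, hab', sub_self]
            have := hMinj m hm _ (Submodule.sub_mem M a.2 b.2) this
            exact sub_eq_zero.mp this
          · intro w
            obtain ⟨v, hv, hvw⟩ := hMsurj m hm w
            exact ⟨⟨v, hv⟩, hvw⟩
        obtain ⟨φi, hφibij, hφi⟩ := hφ i hi
        obtain ⟨φj, hφjbij, hφj⟩ := hφ j hj
        set ei := LinearEquiv.ofBijective φi hφibij with hei
        set ej := LinearEquiv.ofBijective φj hφjbij with hej
        refine hnoniso i j hij ⟨ei.symm.trans ej, ?_⟩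
        intro x hx v w hvw
        set m : ↥M := ei.symm v with hm
        have heiv : (v : V) = (d (m : V) i : V) := by
          have h : ei m = v := by rw [hm, LinearEquiv.apply_symm_apply]
          rw [← h, hei, LinearEquiv.ofBijective_apply]
          exact hφi m
        have hm' : ⁅x, (m : V)⁆ ∈ M := hMstab x hx _ m.2
        have heiw : ei ⟨⁅x, (m : V)⁆, hm'⟩ = w := by
          apply Subtype.ext
          show (φi ⟨⁅x, (m : V)⁆, hm'⟩ : V) = (w : V)
          rw [hφi]
          show (d ⁅x, (m : V)⁆ i : V) = (w : V)
          rw [hE x hx.2 _ i, ← heiv, hvw]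
        have hgoal1 : ((ei.symm.trans ej) v : V) = (d (m : V) j : V) := by
          show (ej (ei.symm v) : V) = _
          rw [← hm, hej, LinearEquiv.ofBijective_apply]
          exact hφj m
        have hgoal2 : ((ei.symm.trans ej) w : V) = ⁅x, (d (m : V) j : V)⁆ := by
          show (ej (ei.symm w) : V) = _
          rw [← heiw, LinearEquiv.symm_apply_apply, hej, LinearEquiv.ofBijective_apply, hφj]
          exact hE x hx.2 _ j
        rw [hgoal1, hgoal2]
  -- hence U ≤ U'
  have hUle : U ≤ U' := by
    intro u hu
    exact key (DFinsupp.support (d u)).card (DFinsupp.support (d u)) le_rfl u hu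
      (fun l hl => DFinsupp.notMem_support_iff.mp hl)
  -- U is stable under k
  have hUk : ∀ x ∈ k, ∀ v ∈ U, ⁅x, v⁆ ∈ U := by
    intro x hx v hv
    have hv' : v ∈ U' := hUle hv
    rw [hU', iSup_subtype'] at hv'
    refine Submodule.iSup_induction (motive := fun v : V => ⁅x, v⁆ ∈ U) _ hv' ?_ ?_ ?_
    · rintro ⟨l, hl⟩ y hy
      exact hl (hkinv l x hx y hy)
    · simp
    · intro a b ha hb
      rw [lie_add]
      exact Submodule.add_mem U ha hb
  -- U is stable under p
  have hUp : ∀ y ∈ p, ∀ v ∈ U, ⁅y, v⁆ ∈ U := by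
    set q : Submodule K L :=
      { carrier := {y | y ∈ p ∧ ∀ v ∈ U, ⁅y, v⁆ ∈ U}
        zero_mem' := ⟨Submodule.zero_mem p, fun v hv => by rw [zero_lie]; exact Submodule.zero_mem U⟩
        add_mem' := fun ha hb => ⟨Submodule.add_mem p ha.1 hb.1, fun v hv => by
          rw [add_lie]; exact Submodule.add_mem U (ha.2 v hv) (hb.2 v hv)⟩
        smul_mem' := fun c y hy => ⟨Submodule.smul_mem p c hy.1, fun v hv => by
          rw [smul_lie]; exact Submodule.smul_mem U c (hy.2 v hv)⟩ } with hq
    have h1 : q ≤ p := fun y hy => hy.1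
    have h2 : g'.toSubmodule ⊓ p ≤ q := by
      rintro y ⟨hy1, hy2⟩
      exact ⟨hy2, fun v hv => hU y hy1 v hv⟩
    have h3 : ∀ x ∈ k, ∀ y ∈ q, ⁅x, y⁆ ∈ q := by
      intro x hx y hy
      refine ⟨hkp x hx y hy.1, fun v hv => ?_⟩
      rw [lie_lie]
      exact Submodule.sub_mem U (hUk x hx _ (hy.2 v hv)) (hy.2 _ (hUk x hx v hv))
    intro y hy
    exact (hgen q h1 h2 h3 hy).2
  -- U is stable under all of L
  have hUL : ∀ x : L, ∀ v ∈ U, ⁅x, v⁆ ∈ U := by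
    intro x v hv
    have hx : x ∈ k.toSubmodule ⊔ p := by
      rw [hdec.sup_eq_top]
      trivial
    obtain ⟨a, ha, b, hb, rfl⟩ := Submodule.mem_sup.mp hx
    rw [add_lie]
    exact Submodule.add_mem U (hUk a ha v hv) (hUp b hb v hv)
  exact hVirr U hUL
end

section
/- In the setting of a holomorphic pair: let g = k ⊕ p₊ ⊕ p₋ and g' = k' ⊕ p'₊ ⊕ p'₋ be Lie algebras with g' ⊆ g, k' ⊆ k, p'₊ = g' ∩ p₊, p'₋ = g' ∩ p₋, with an element z' ∈ k' ∩ center of k such that ad(z') = ±1 on p_± and 0 on k. Let V be an irreducible g-module on which z' acts semisimply, generated by V₀ = V^{p₋}, with z' acting on V₀ by the scalar a₀. Then for all n ≥ 0, Uₙ(g)·V₀ ∩ U(g')·V₀ = Uₙ(g')·V₀. -/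
/-- The filtration `Uₙ(s)·X₀`: `F 0 = X₀`, `F (n+1) = F n + span { x·v : x ∈ s, v ∈ F n }`. -/
def envFilt {K L V : Type*} [Field K] [LieRing L] [LieAlgebra K L]
    [AddCommGroup V] [Module K V] [LieRingModule L V] [LieModule K L V]
    (s : Set L) (X0 : Submodule K V) : ℕ → Submodule K V
  | 0 => X0
  | n + 1 => envFilt s X0 n ⊔
      Submodule.span K {w : V | ∃ x ∈ s, ∃ v ∈ envFilt s X0 n, w = ⁅x, v⁆}

/-- The eigenspace `V(a) = {v ∈ V : z·v = a v}` of the action of `z`. -/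
def lieEig {K L V : Type*} [Field K] [LieRing L] [LieAlgebra K L]
    [AddCommGroup V] [Module K V] [LieRingModule L V] [LieModule K L V]
    (z : L) (a : K) : Submodule K V where
  carrier := {v | ⁅z, v⁆ = a • v}
  add_mem' := by
    intro u v hu hv
    simp only [Set.mem_setOf_eq] at *
    rw [lie_add, hu, hv, smul_add]
  zero_mem' := by simp
  smul_mem' := by
    intro c v hv
    simp only [Set.mem_setOf_eq] at *
    rw [lie_smul, hv, smul_comm]

/-- The subspace of vectors annihilated by every element of `s ⊆ L`. -/
def annihilatedBy {K L V : Type*} [Field K] [LieRing L] [LieAlgebra K L]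
    [AddCommGroup V] [Module K V] [LieRingModule L V] [LieModule K L V]
    (s : Set L) : Submodule K V where
  carrier := {v | ∀ x ∈ s, ⁅x, v⁆ = 0}
  add_mem' := by
    intro u v hu hv x hx
    rw [lie_add, hu x hx, hv x hx, add_zero]
  zero_mem' := by
    intro x _
    exact lie_zero x
  smul_mem' := by
    intro c v hv x hx
    rw [lie_smul, hv x hx, smul_zero]

namespace Stmt14Aux

variable {K L V : Type*} [Field K] [LieRing L] [LieAlgebra K L]
    [AddCommGroup V] [Module K V] [LieRingModule L V] [LieModule K L V]

lemma mem_lieEig {z : L} {a : K} {v : V} :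
    v ∈ (lieEig z a : Submodule K V) ↔ ⁅z, v⁆ = a • v := Iff.rfl

lemma mem_annihilatedBy {s : Set L} {v : V} :
    v ∈ (annihilatedBy s : Submodule K V) ↔ ∀ x ∈ s, ⁅x, v⁆ = 0 := Iff.rfl

lemma envFilt_le_succ (s : Set L) (X0 : Submodule K V) (n : ℕ) :
    envFilt s X0 n ≤ envFilt s X0 (n + 1) := le_sup_left

lemma envFilt_mono_nat (s : Set L) (X0 : Submodule K V) : Monotone (envFilt s X0) :=
  monotone_nat_of_le_succ (envFilt_le_succ s X0)

lemma envFilt_mono_set {s t : Set L} (h : s ⊆ t) (X0 : Submodule K V) :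
    ∀ n, envFilt s X0 n ≤ envFilt t X0 n := by
  intro n
  induction n with
  | zero => exact le_rfl
  | succ n ih =>
    refine sup_le (ih.trans (envFilt_le_succ t X0 n)) ?_
    refine (Submodule.span_le).2 ?_
    rintro w ⟨x, hx, v, hv, rfl⟩
    exact Submodule.mem_sup_right (Submodule.subset_span ⟨x, h hx, v, ih hv, rfl⟩)

lemma lie_mem_envFilt_succ {s : Set L} {X0 : Submodule K V} {n : ℕ} {x : L} {v : V}
    (hx : x ∈ s) (hv : v ∈ envFilt s X0 n) : ⁅x, v⁆ ∈ envFilt s X0 (n + 1) :=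
  Submodule.mem_sup_right (Submodule.subset_span ⟨x, hx, v, hv, rfl⟩)

lemma envFilt_succ_le {s : Set L} {X0 : Submodule K V} {n : ℕ} {M : Submodule K V}
    (h1 : envFilt s X0 n ≤ M)
    (h2 : ∀ x ∈ s, ∀ v ∈ envFilt s X0 n, ⁅x, v⁆ ∈ M) :
    envFilt s X0 (n + 1) ≤ M := by
  refine sup_le h1 ((Submodule.span_le).2 ?_)
  rintro w ⟨x, hx, v, hv, rfl⟩
  exact h2 x hx v hv

lemma eig_sum_zero {W : Type*} [AddCommGroup W] [Module ℂ W]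
    (T : W →ₗ[ℂ] W) (a₀ : ℂ) :
    ∀ N : ℕ, ∀ f : ℕ → W, (∀ k, T (f k) = (a₀ + k) • f k) →
      ∑ k ∈ Finset.range N, f k = 0 → ∀ k < N, f k = 0 := by
  intro N
  induction N with
  | zero => exact fun f _ _ k hk => absurd hk (Nat.not_lt_zero k)
  | succ N ih =>
    intro f hf hsum
    have h1 : ∑ k ∈ Finset.range (N + 1), (a₀ + (k : ℂ)) • f k = 0 := by
      have := congrArg T hsum
      rw [map_sum, map_zero] at this
      rw [← this]
      exact Finset.sum_congr rfl fun k _ => (hf k).symm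
    have h2 : ∑ k ∈ Finset.range (N + 1), (a₀ + (N : ℂ)) • f k = 0 := by
      rw [← Finset.smul_sum, hsum, smul_zero]
    have h3 : ∑ k ∈ Finset.range (N + 1), ((k : ℂ) - N) • f k = 0 := by
      have := sub_eq_zero.mpr (h1.trans h2.symm)
      rw [← Finset.sum_sub_distrib] at this
      rw [← this]
      refine Finset.sum_congr rfl fun k _ => ?_
      rw [← sub_smul]; ring_nf
    have h4 : ∑ k ∈ Finset.range N, ((k : ℂ) - N) • f k = 0 := by
      rw [Finset.sum_range_succ, sub_self, zero_smul, add_zero] at h3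
      exact h3
    have hg : ∀ k < N, ((k : ℂ) - N) • f k = 0 := by
      refine ih (fun k => ((k : ℂ) - N) • f k) (fun k => ?_) h4
      rw [map_smul, hf k, smul_comm]
    have hfN : ∀ k < N, f k = 0 := by
      intro k hk
      have hne : (k : ℂ) - N ≠ 0 := by
        refine sub_ne_zero.2 ?_
        exact_mod_cast Nat.ne_of_lt hk
      rcases smul_eq_zero.mp (hg k hk) with h | h
      · exact absurd h hne
      · exact h
    intro k hk
    rcases Nat.lt_succ_iff_lt_or_eq.mp hk with h | rfl
    · exact hfN k h
    · have : ∑ k ∈ Finset.range k, f k = 0 :=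
        Finset.sum_eq_zero fun j hj => hfN j (Finset.mem_range.mp hj)
      rw [Finset.sum_range_succ, this, zero_add] at hsum
      exact hsum

end Stmt14Aux

open Stmt14Aux

/-- Holomorphic pair setting: `g = k ⊕ p₊ ⊕ p₋` and a subalgebra
`g' ⊆ g` with `g' = (g'∩k) ⊕ (g'∩p₊) ⊕ (g'∩p₋)`, and `z' ∈ g' ∩ k` central in `k`, with
`ad(z') = ±1` on `p_±`.  If `V` is an irreducible `g`-module on which `z'` acts
semisimply, generated by `V₀ = V^{p₋}`, and `z'` acts on `V₀` by the scalar `a₀`, then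
`Uₙ(g)·V₀ ∩ U(g')·V₀ = Uₙ(g')·V₀` for all `n ≥ 0`. -/
theorem statement_14 {L V : Type*} [LieRing L] [LieAlgebra ℂ L]
    [AddCommGroup V] [Module ℂ V] [LieRingModule L V] [LieModule ℂ L V]
    (kk pp pm : Submodule ℂ L)
    (hdec : DirectSum.IsInternal (fun i : Fin 3 => ![kk, pp, pm] i))
    (hksub : ∀ x ∈ kk, ∀ y ∈ kk, ⁅x, y⁆ ∈ kk)
    (hkpp : ∀ x ∈ kk, ∀ y ∈ pp, ⁅x, y⁆ ∈ pp)
    (hkpm : ∀ x ∈ kk, ∀ y ∈ pm, ⁅x, y⁆ ∈ pm)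
    (g' : LieSubalgebra ℂ L)
    (hg'dec : g'.toSubmodule =
      g'.toSubmodule ⊓ kk ⊔ g'.toSubmodule ⊓ pp ⊔ g'.toSubmodule ⊓ pm)
    (z' : L) (hz'g' : z' ∈ g') (hz'k : z' ∈ kk)
    (hadk : ∀ x ∈ kk, ⁅z', x⁆ = 0)
    (hadp : ∀ x ∈ pp, ⁅z', x⁆ = x)
    (hadm : ∀ x ∈ pm, ⁅z', x⁆ = -x)
    (hVnt : Nontrivial V)
    (hVirr : ∀ U : Submodule ℂ V, (∀ x : L, ∀ v ∈ U, ⁅x, v⁆ ∈ U) → U = ⊥ ∨ U = ⊤)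
    (hss : ⨆ a : ℂ, (lieEig z' a : Submodule ℂ V) = ⊤)
    (hgen : ⨆ n : ℕ, envFilt (Set.univ : Set L)
        (annihilatedBy (pm : Set L) : Submodule ℂ V) n = ⊤)
    (a₀ : ℂ)
    (hscal : ∀ v ∈ (annihilatedBy (pm : Set L) : Submodule ℂ V), ⁅z', v⁆ = a₀ • v) :
    ∀ n : ℕ,
      envFilt (Set.univ : Set L) (annihilatedBy (pm : Set L) : Submodule ℂ V) n ⊓
          (⨆ m : ℕ, envFilt (g' : Set L) (annihilatedBy (pm : Set L) : Submodule ℂ V) m)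
        = envFilt (g' : Set L) (annihilatedBy (pm : Set L) : Submodule ℂ V) n := by
  classical
  set V₀ : Submodule ℂ V := (annihilatedBy (pm : Set L) : Submodule ℂ V) with hV₀def
  -- decomposition of L
  have hsup : kk ⊔ pp ⊔ pm = ⊤ := by
    have h := hdec.submodule_iSup_eq_top
    rw [← h]
    apply le_antisymm
    · refine sup_le (sup_le ?_ ?_) ?_
      · exact le_iSup_of_le 0 (by simp)
      · exact le_iSup_of_le 1 (by simp)
      · exact le_iSup_of_le 2 (by simp)
    · refine iSup_le fun i => ?_
      fin_cases i
      · exact le_sup_of_le_left (le_sup_of_le_left (by simp))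
      · exact le_sup_of_le_left (le_sup_of_le_right (by simp))
      · exact le_sup_of_le_right (by simp)
  have hdecomp : ∀ x : L, ∃ a ∈ kk, ∃ b ∈ pp, ∃ c ∈ pm, x = a + b + c := by
    intro x
    have hx : x ∈ kk ⊔ pp ⊔ pm := by rw [hsup]; exact Submodule.mem_top
    obtain ⟨y, hy, c, hc, rfl⟩ := Submodule.mem_sup.1 hx
    obtain ⟨a, ha, b, hb, rfl⟩ := Submodule.mem_sup.1 hy
    exact ⟨a, ha, b, hb, c, hc, rfl⟩
  have hppmm : pp ⊓ pm = ⊥ := by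
    have h := hdec.submodule_iSupIndep.pairwiseDisjoint (show (1 : Fin 3) ≠ 2 by decide)
    simpa [disjoint_iff] using h
  have hzk : ∀ w : L, ⁅z', w⁆ = 0 → w ∈ kk := by
    intro w hw
    obtain ⟨a, ha, b, hb, c, hc, rfl⟩ := hdecomp w
    rw [lie_add, lie_add, hadk a ha, hadp b hb, hadm c hc, zero_add] at hw
    have hbc : b = c := by
      have := add_neg_eq_zero.mp hw
      exact this
    have hb0 : b ∈ pp ⊓ pm := ⟨hb, hbc ▸ hc⟩
    rw [hppmm] at hb0
    simp only [Submodule.mem_bot] at hb0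
    subst hb0
    rw [← hbc] at hc ⊢
    simpa using ha
  have hpmpp : ∀ y ∈ pm, ∀ x ∈ pp, ⁅y, x⁆ ∈ kk := by
    intro y hy x hx
    apply hzk
    rw [leibniz_lie, hadm y hy, hadp x hx, neg_lie, neg_add_cancel]
  -- actions on V₀
  have hkV0 : ∀ x ∈ kk, ∀ v ∈ V₀, ⁅x, v⁆ ∈ V₀ := by
    intro x hx v hv
    intro y hy
    have h1 : ⁅y, x⁆ ∈ pm := by
      have := hkpm x hx y hy
      simpa using (neg_mem this : -⁅x, y⁆ ∈ pm)
    rw [leibniz_lie, hv y hy, lie_zero, add_zero]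
    exact hv _ h1
  -- decomposition within g'
  have hdecomp' : ∀ x ∈ g', ∃ a ∈ g'.toSubmodule ⊓ kk, ∃ b ∈ g'.toSubmodule ⊓ pp,
      ∃ c ∈ g'.toSubmodule ⊓ pm, x = a + b + c := by
    intro x hx
    have hx' : x ∈ g'.toSubmodule ⊓ kk ⊔ g'.toSubmodule ⊓ pp ⊔ g'.toSubmodule ⊓ pm := by
      rw [← hg'dec]; exact hx
    obtain ⟨y, hy, c, hc, rfl⟩ := Submodule.mem_sup.1 hx'
    obtain ⟨a, ha, b, hb, rfl⟩ := Submodule.mem_sup.1 hy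
    exact ⟨a, ha, b, hb, c, hc, rfl⟩
  -- the p₊ filtrations
  set P : ℕ → Submodule ℂ V := envFilt (pp : Set L) V₀ with hPdef
  set sQ : Set L := ((g'.toSubmodule ⊓ pp : Submodule ℂ L) : Set L) with hsQdef
  set Q : ℕ → Submodule ℂ V := envFilt sQ V₀ with hQdef
  -- k and p₋ stabilize P
  have key_k : ∀ x ∈ kk, ∀ n, ∀ v ∈ P n, ⁅x, v⁆ ∈ P n := by
    intro x hx n
    induction n with
    | zero => exact fun v hv => hkV0 x hx v hv
    | succ n ih =>
      have : P (n + 1) ≤ (P (n + 1)).comap (LieModule.toEnd ℂ L V x) := by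
        refine envFilt_succ_le ?_ ?_
        · intro v hv
          simp only [Submodule.mem_comap, LieModule.toEnd_apply_apply]
          exact envFilt_le_succ _ _ n (ih v hv)
        · intro y hy v hv
          simp only [Submodule.mem_comap, LieModule.toEnd_apply_apply]
          rw [leibniz_lie]
          exact add_mem (lie_mem_envFilt_succ (hkpp x hx y hy) hv)
            (lie_mem_envFilt_succ hy (ih v hv))
      intro v hv
      simpa only [Submodule.mem_comap, LieModule.toEnd_apply_apply] using this hv
  have key_m : ∀ y ∈ pm, ∀ n, ∀ v ∈ P n, ⁅y, v⁆ ∈ P n := by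
    intro y hy n
    induction n with
    | zero =>
      intro v hv
      have : ⁅y, v⁆ = 0 := hv y hy
      rw [this]; exact zero_mem _
    | succ n ih =>
      have : P (n + 1) ≤ (P (n + 1)).comap (LieModule.toEnd ℂ L V y) := by
        refine envFilt_succ_le ?_ ?_
        · intro v hv
          simp only [Submodule.mem_comap, LieModule.toEnd_apply_apply]
          exact envFilt_le_succ _ _ n (ih v hv)
        · intro x hx v hv
          simp only [Submodule.mem_comap, LieModule.toEnd_apply_apply]
          rw [leibniz_lie]
          refine add_mem ?_ (lie_mem_envFilt_succ hx (ih v hv))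
          exact key_k _ (hpmpp y hy x hx) (n + 1) v (envFilt_le_succ _ _ n hv)
      intro v hv
      simpa only [Submodule.mem_comap, LieModule.toEnd_apply_apply] using this hv
  have hFP : ∀ n, envFilt (Set.univ : Set L) V₀ n = P n := by
    intro n
    induction n with
    | zero => rfl
    | succ n ih =>
      refine le_antisymm ?_ (envFilt_mono_set (Set.subset_univ _) _ _)
      refine envFilt_succ_le (ih.le.trans (envFilt_le_succ _ _ n)) ?_
      intro x _ v hv
      rw [ih] at hv
      obtain ⟨a, ha, b, hb, c, hc, rfl⟩ := hdecomp x
      rw [add_lie, add_lie]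
      refine add_mem (add_mem ?_ ?_) ?_
      · exact envFilt_le_succ _ _ n (key_k a ha n v hv)
      · exact lie_mem_envFilt_succ hb hv
      · exact envFilt_le_succ _ _ n (key_m c hc n v hv)
  -- membership helpers for sQ
  have hmem_sQ : ∀ {y : L}, y ∈ sQ → y ∈ g'.toSubmodule ⊓ pp := fun hy => hy
  have hlie_g' : ∀ {x y : L}, x ∈ g'.toSubmodule → y ∈ g'.toSubmodule →
      ⁅x, y⁆ ∈ g'.toSubmodule := by
    intro x y hx hy
    rw [LieSubalgebra.mem_toSubmodule] at hx hy ⊢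
    exact g'.lie_mem hx hy
  -- k' and p'₋ stabilize Q
  have key_kQ : ∀ x ∈ g'.toSubmodule ⊓ kk, ∀ n, ∀ v ∈ Q n, ⁅x, v⁆ ∈ Q n := by
    intro x hx n
    induction n with
    | zero => exact fun v hv => hkV0 x hx.2 v hv
    | succ n ih =>
      have : Q (n + 1) ≤ (Q (n + 1)).comap (LieModule.toEnd ℂ L V x) := by
        refine envFilt_succ_le ?_ ?_
        · intro v hv
          simp only [Submodule.mem_comap, LieModule.toEnd_apply_apply]
          exact envFilt_le_succ _ _ n (ih v hv)
        · intro y hy v hv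
          have hy' := hmem_sQ hy
          simp only [Submodule.mem_comap, LieModule.toEnd_apply_apply]
          rw [leibniz_lie]
          refine add_mem (lie_mem_envFilt_succ ?_ hv) (lie_mem_envFilt_succ hy (ih v hv))
          exact (⟨hlie_g' hx.1 hy'.1, hkpp x hx.2 y hy'.2⟩ :
            ⁅x, y⁆ ∈ g'.toSubmodule ⊓ pp)
      intro v hv
      simpa only [Submodule.mem_comap, LieModule.toEnd_apply_apply] using this hv
  have key_mQ : ∀ y ∈ g'.toSubmodule ⊓ pm, ∀ n, ∀ v ∈ Q n, ⁅y, v⁆ ∈ Q n := by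
    intro y hy n
    induction n with
    | zero =>
      intro v hv
      have : ⁅y, v⁆ = 0 := hv y hy.2
      rw [this]; exact zero_mem _
    | succ n ih =>
      have : Q (n + 1) ≤ (Q (n + 1)).comap (LieModule.toEnd ℂ L V y) := by
        refine envFilt_succ_le ?_ ?_
        · intro v hv
          simp only [Submodule.mem_comap, LieModule.toEnd_apply_apply]
          exact envFilt_le_succ _ _ n (ih v hv)
        · intro x hx v hv
          have hx' := hmem_sQ hx
          simp only [Submodule.mem_comap, LieModule.toEnd_apply_apply]
          rw [leibniz_lie]
          refine add_mem ?_ (lie_mem_envFilt_succ hx (ih v hv))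
          exact key_kQ _ ⟨hlie_g' hy.1 hx'.1, hpmpp y hy.2 x hx'.2⟩ (n + 1) v
            (envFilt_le_succ _ _ n hv)
      intro v hv
      simpa only [Submodule.mem_comap, LieModule.toEnd_apply_apply] using this hv
  have hGQ : ∀ n, envFilt (g' : Set L) V₀ n = Q n := by
    intro n
    induction n with
    | zero => rfl
    | succ n ih =>
      refine le_antisymm ?_ (envFilt_mono_set (fun x hx => (hmem_sQ hx).1) _ _)
      refine envFilt_succ_le (ih.le.trans (envFilt_le_succ _ _ n)) ?_
      intro x hx v hv
      rw [ih] at hv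
      obtain ⟨a, ha, b, hb, c, hc, rfl⟩ := hdecomp' x hx
      rw [add_lie, add_lie]
      refine add_mem (add_mem ?_ ?_) ?_
      · exact envFilt_le_succ _ _ n (key_kQ a ha n v hv)
      · exact lie_mem_envFilt_succ (show b ∈ sQ from hb) hv
      · exact envFilt_le_succ _ _ n (key_mQ c hc n v hv)
  -- eigenvalue grading
  set E : ℕ → Submodule ℂ V := fun k => (lieEig z' (a₀ + k) : Submodule ℂ V) with hEdef
  have hV0E : V₀ ≤ E 0 := by
    intro v hv
    show ⁅z', v⁆ = (a₀ + ((0 : ℕ) : ℂ)) • v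
    rw [hscal v hv]; norm_num
  have hraise : ∀ (k : ℕ) (x : L), x ∈ pp → ∀ v ∈ E k, ⁅x, v⁆ ∈ E (k + 1) := by
    intro k x hx v hv
    show ⁅z', ⁅x, v⁆⁆ = (a₀ + ((k + 1 : ℕ) : ℂ)) • ⁅x, v⁆
    have hv' : ⁅z', v⁆ = (a₀ + (k : ℂ)) • v := hv
    have hc : (a₀ + ((k + 1 : ℕ) : ℂ)) = (a₀ + (k : ℂ)) + 1 := by push_cast; ring
    rw [leibniz_lie, hadp x hx, hv', lie_smul, hc]; module
  have hPdecE : ∀ n, P n ≤ ⨆ k ∈ Finset.range (n + 1), E k := by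
    intro n
    induction n with
    | zero =>
      intro v hv
      exact Submodule.mem_iSup_of_mem 0 (Submodule.mem_iSup_of_mem (by simp) (hV0E hv))
    | succ n ih =>
      refine envFilt_succ_le (ih.trans (biSup_mono fun k hk => ?_)) ?_
      · simp only [Finset.mem_range] at hk ⊢; omega
      · intro x hx v hv
        have hcomap : (⨆ k ∈ Finset.range (n + 1), E k) ≤
            Submodule.comap (LieModule.toEnd ℂ L V x) (⨆ k ∈ Finset.range (n + 2), E k) := by
          refine iSup₂_le fun k hk => ?_
          intro w hw
          simp only [Submodule.mem_comap, LieModule.toEnd_apply_apply]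
          refine Submodule.mem_iSup_of_mem (k + 1) (Submodule.mem_iSup_of_mem ?_ ?_)
          · simp only [Finset.mem_range] at hk ⊢; omega
          · exact hraise k x hx w hw
        simpa only [Submodule.mem_comap, LieModule.toEnd_apply_apply] using hcomap (ih hv)
  have hQdecE : ∀ m, Q m ≤ ⨆ k ∈ Finset.range (m + 1), (E k ⊓ Q k) := by
    intro m
    induction m with
    | zero =>
      intro v hv
      refine Submodule.mem_iSup_of_mem 0 (Submodule.mem_iSup_of_mem (by simp) ?_)
      exact ⟨hV0E hv, hv⟩
    | succ m ih =>
      refine envFilt_succ_le (ih.trans (biSup_mono fun k hk => ?_)) ?_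
      · simp only [Finset.mem_range] at hk ⊢; omega
      · intro x hx v hv
        have hcomap : (⨆ k ∈ Finset.range (m + 1), (E k ⊓ Q k)) ≤
            Submodule.comap (LieModule.toEnd ℂ L V x)
              (⨆ k ∈ Finset.range (m + 2), (E k ⊓ Q k)) := by
          refine iSup₂_le fun k hk => ?_
          intro w hw
          simp only [Submodule.mem_comap, LieModule.toEnd_apply_apply]
          refine Submodule.mem_iSup_of_mem (k + 1) (Submodule.mem_iSup_of_mem ?_ ?_)
          · simp only [Finset.mem_range] at hk ⊢; omega
          · exact ⟨hraise k x (hmem_sQ hx).2 w hw.1, lie_mem_envFilt_succ hx hw.2⟩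
        simpa only [Submodule.mem_comap, LieModule.toEnd_apply_apply] using hcomap (ih hv)
  -- final assembly
  intro n
  apply le_antisymm
  · rintro v hv
    obtain ⟨hvF, hvG⟩ := Submodule.mem_inf.1 hv
    rw [hFP n] at hvF
    obtain ⟨m, hvm⟩ := (Submodule.mem_iSup_of_directed _
      ((envFilt_mono_nat (g' : Set L) V₀).directed_le)).1 hvG
    rw [hGQ m] at hvm
    have hvP : v ∈ ⨆ k ∈ Finset.range (n + 1), E k := hPdecE n hvF
    have hvQ : v ∈ ⨆ k ∈ Finset.range (max n m + 1), (E k ⊓ Q k) := by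
      have hsub : (⨆ k ∈ Finset.range (m + 1), (E k ⊓ Q k)) ≤
          ⨆ k ∈ Finset.range (max n m + 1), (E k ⊓ Q k) :=
        biSup_mono fun k hk => by simp only [Finset.mem_range] at hk ⊢; omega
      exact hsub (hQdecE m hvm)
    obtain ⟨μ, hμ⟩ := (Submodule.mem_iSup_finset_iff_exists_sum _ _).1 hvQ
    obtain ⟨ν, hν⟩ := (Submodule.mem_iSup_finset_iff_exists_sum _ _).1 hvP
    set f : ℕ → V := fun k =>
      (μ k : V) - (if k ∈ Finset.range (n + 1) then (ν k : V) else 0) with hfdef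
    have hsum : ∑ k ∈ Finset.range (max n m + 1), f k = 0 := by
      rw [Finset.sum_sub_distrib, hμ, Finset.sum_ite_mem,
        Finset.inter_eq_right.mpr (Finset.range_subset_range.2 (by omega)), hν, sub_self]
    have heig : ∀ k, (LieModule.toEnd ℂ L V z') (f k) = (a₀ + k) • f k := by
      intro k
      have h1 : ⁅z', (μ k : V)⁆ = (a₀ + (k : ℂ)) • (μ k : V) :=
        (Submodule.mem_inf.1 (μ k).2).1
      have h2 : ⁅z', (if k ∈ Finset.range (n + 1) then (ν k : V) else 0)⁆ =
          (a₀ + (k : ℂ)) • (if k ∈ Finset.range (n + 1) then (ν k : V) else 0) := by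
        split
        · exact (ν k).2
        · simp
      simp only [hfdef, map_sub, LieModule.toEnd_apply_apply, h1, h2, smul_sub]
    have hzero := eig_sum_zero (LieModule.toEnd ℂ L V z') a₀ (max n m + 1) f heig hsum
    rw [hGQ n, ← hμ]
    refine Submodule.sum_mem _ fun k hk => ?_
    rcases le_or_gt k n with h | h
    · exact envFilt_mono_nat _ _ h (Submodule.mem_inf.1 (μ k).2).2
    · have hf0 := hzero k (Finset.mem_range.1 hk)
      have hnot : k ∉ Finset.range (n + 1) := by
        simp only [Finset.mem_range]; omega
      have hμ0 : (μ k : V) = 0 := by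
        have hnot' : ¬ k < n + 1 := by omega
        simpa [hfdef, hnot', Nat.not_le.2 h] using hf0
      rw [hμ0]; exact zero_mem _
  · refine le_inf ?_ ?_
    · rw [hGQ n, hFP n]
      exact envFilt_mono_set (fun x hx => (hmem_sQ hx).2) _ n
    · exact le_iSup (fun m => envFilt (g' : Set L) V₀ m) n
end
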